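/- Let K, T ⊆ ℝ^n be convex bodies. Then the fractional covering number satisfies N_ω(K, T) ≤ |K − T| / |T|. -/

import Mathlib

open MeasureTheory Pointwise ENNReal NNReal

/-- The fractional covering number of `K` by translates of `T`: the infimal total
weight of a finite weighted family of translates of `T` covering `K` fractionally. -/
noncomputable def fracCover {n : ℕ} (K T : Set (EuclideanSpace ℝ (Fin n))) : ℝ≥0∞ :=
  sInf {w : ℝ≥0∞ | ∃ S : Finset ((EuclideanSpace ℝ (Fin n)) × ℝ≥0),
    (∀ p ∈ S, (0 : ℝ≥0) < p.2) ∧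
    (∀ x ∈ K, (1 : ℝ) ≤ ∑ p ∈ S, (p.2 : ℝ) * (p.1 +ᵥ T).indicator 1 x) ∧
    w = ∑ p ∈ S, (p.2 : ℝ≥0∞)}

section Aux

variable {n : ℕ}

/-- Volume of a half-open axis-parallel cube in Euclidean space. -/
lemma aux_cube_volume (y : EuclideanSpace ℝ (Fin n)) (δ : ℝ) (hδ : 0 ≤ δ) :
    volume {z : EuclideanSpace ℝ (Fin n) | ∀ i, z i ∈ Set.Ico (y i) (y i + δ)} =
      ENNReal.ofReal (δ ^ n) := by
  have hset : {z : EuclideanSpace ℝ (Fin n) | ∀ i, z i ∈ Set.Ico (y i) (y i + δ)} =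
      (MeasurableEquiv.toLp 2 (Fin n → ℝ)).symm ⁻¹'
        (Set.univ.pi fun i => Set.Ico (y i) (y i + δ)) := by
    ext z
    simp only [Set.mem_setOf_eq, Set.mem_preimage, Set.mem_pi, Set.mem_univ, true_implies]
    exact Iff.rfl
  rw [hset, (EuclideanSpace.volume_preserving_symm_measurableEquiv_toLp (Fin n)).measure_preimage
    ((MeasurableSet.univ_pi fun i => measurableSet_Ico).nullMeasurableSet),
    volume_pi_pi]
  simp [Real.volume_Ico, ENNReal.ofReal_pow hδ]

lemma aux_cube_measurable (y : EuclideanSpace ℝ (Fin n)) (δ : ℝ) :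
    MeasurableSet {z : EuclideanSpace ℝ (Fin n) | ∀ i, z i ∈ Set.Ico (y i) (y i + δ)} := by
  have hset : {z : EuclideanSpace ℝ (Fin n) | ∀ i, z i ∈ Set.Ico (y i) (y i + δ)} =
      (MeasurableEquiv.toLp 2 (Fin n → ℝ)).symm ⁻¹'
        (Set.univ.pi fun i => Set.Ico (y i) (y i + δ)) := by
    ext z
    simp only [Set.mem_setOf_eq, Set.mem_preimage, Set.mem_pi, Set.mem_univ, true_implies]
    exact Iff.rfl
  rw [hset]
  exact (MeasurableEquiv.toLp 2 (Fin n → ℝ)).symm.measurable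
    (MeasurableSet.univ_pi fun i => measurableSet_Ico)

/-- Euclidean distance bound from coordinatewise bounds. -/
lemma aux_dist_le (z w : EuclideanSpace ℝ (Fin n)) {c : ℝ} (hc : 0 ≤ c)
    (h : ∀ i, |z i - w i| ≤ c) : dist z w ≤ c * Real.sqrt n := by
  rw [EuclideanSpace.dist_eq]
  have h1 : ∑ i, dist (z i) (w i) ^ 2 ≤ ∑ _i : Fin n, c ^ 2 := by
    refine Finset.sum_le_sum fun i _ => ?_
    rw [Real.dist_eq]
    exact pow_le_pow_left₀ (abs_nonneg _) (h i) 2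
  have h2 : (∑ _i : Fin n, c ^ 2) = (n : ℝ) * c ^ 2 := by simp [mul_comm]
  calc Real.sqrt (∑ i, dist (z i) (w i) ^ 2) ≤ Real.sqrt ((n : ℝ) * c ^ 2) := by
        apply Real.sqrt_le_sqrt; rw [← h2]; exact h1
    _ = c * Real.sqrt n := by
        rw [Real.sqrt_mul (by positivity), Real.sqrt_sq hc, mul_comm]

lemma aux_abs_coord_le (z : EuclideanSpace ℝ (Fin n)) (i : Fin n) : |z i| ≤ ‖z‖ := by
  rw [EuclideanSpace.norm_eq]
  have : |z i| = Real.sqrt (‖z i‖ ^ 2) := by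
    rw [Real.sqrt_sq_eq_abs]; simp
  rw [this]
  apply Real.sqrt_le_sqrt
  exact Finset.single_le_sum (f := fun j => ‖z j‖ ^ 2) (fun j _ => by positivity)
    (Finset.mem_univ i)

end Aux

set_option maxHeartbeats 2000000 in
/-- `N_ω(K, T) ≤ |K − T| / |T|`. -/
theorem fracCover_volume_bound
    (n : ℕ) (K T : Set (EuclideanSpace ℝ (Fin n)))
    (hKcomp : IsCompact K) (hKconv : Convex ℝ K) (hKint : (interior K).Nonempty)
    (hTcomp : IsCompact T) (hTconv : Convex ℝ T) (hTint : (interior T).Nonempty) :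
    fracCover K T ≤ volume (K - T) / volume T := by
  classical
  -- a ball inside T
  obtain ⟨t0, ht0⟩ := hTint
  obtain ⟨r, rpos, hball⟩ := Metric.isOpen_iff.1 isOpen_interior t0 ht0
  have hballT : Metric.ball t0 r ⊆ T := hball.trans interior_subset
  have hcb : Metric.closedBall t0 r ⊆ T := by
    rw [← closure_ball t0 rpos.ne']
    exact closure_minimal hballT hTcomp.isClosed
  have hμT0 : volume T ≠ 0 :=
    (lt_of_lt_of_le (Metric.measure_ball_pos volume t0 rpos) (measure_mono hballT)).ne'
  have hμTtop : volume T ≠ ⊤ := hTcomp.measure_lt_top.ne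
  have hKT : IsCompact (K - T) := by
    rw [sub_eq_add_neg]
    exact hKcomp.add hTcomp.neg
  have hμKTtop : volume (K - T) ≠ ⊤ := hKT.measure_lt_top.ne
  set s₀ : ℝ := Real.sqrt n with hs₀def
  have hs₀ : 0 ≤ s₀ := Real.sqrt_nonneg n
  -- the bound function and its limit
  set f : ℝ → ℝ≥0∞ := fun δ => volume (Metric.cthickening (δ * s₀) (K - T)) *
      (ENNReal.ofReal ((1 - δ * s₀ / r) ^ n) * volume T)⁻¹ with hf
  have hlim : Filter.Tendsto f (nhdsWithin 0 (Set.Ioi 0))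
      (nhds (volume (K - T) / volume T)) := by
    have h1 : Filter.Tendsto (fun δ : ℝ => volume (Metric.cthickening (δ * s₀) (K - T)))
        (nhdsWithin 0 (Set.Ioi 0)) (nhds (volume (K - T))) := by
      refine (tendsto_measure_cthickening_of_isCompact hKT).comp ?_
      have : Filter.Tendsto (fun δ : ℝ => δ * s₀) (nhds 0) (nhds 0) := by
        simpa using (continuous_mul_right s₀).tendsto (0 : ℝ)
      exact this.mono_left nhdsWithin_le_nhds
    have h2 : Filter.Tendsto (fun δ : ℝ => (ENNReal.ofReal ((1 - δ * s₀ / r) ^ n) * volume T)⁻¹)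
        (nhdsWithin 0 (Set.Ioi 0)) (nhds ((1 * volume T)⁻¹)) := by
      refine Filter.Tendsto.inv ?_
      refine ENNReal.Tendsto.mul_const ?_ (Or.inl one_ne_zero)
      have hcont : Filter.Tendsto (fun δ : ℝ => (1 - δ * s₀ / r) ^ n) (nhds 0)
          (nhds 1) := by
        have hco : Continuous fun δ : ℝ => (1 - δ * s₀ / r) ^ n := by continuity
        have h := hco.tendsto 0
        simpa using h
      have hof : Filter.Tendsto (fun δ : ℝ => ENNReal.ofReal ((1 - δ * s₀ / r) ^ n))
          (nhds 0) (nhds 1) := by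
        have := (ENNReal.continuous_ofReal.tendsto 1).comp hcont
        simpa [Function.comp_def] using this
      exact hof.mono_left nhdsWithin_le_nhds
    have := ENNReal.Tendsto.mul h1 (Or.inr (by
        simp only [one_mul]
        exact ENNReal.inv_ne_top.2 hμT0)) h2 (Or.inl (by
        simp only [one_mul]
        exact ENNReal.inv_ne_zero.2 hμTtop))
    rw [hf]; simpa [div_eq_mul_inv] using this
  refine ge_of_tendsto hlim ?_
  have hmem : Set.Ioo (0 : ℝ) (r / (s₀ + 1)) ∈ nhdsWithin (0 : ℝ) (Set.Ioi 0) :=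
    Ioo_mem_nhdsGT_of_mem ⟨le_refl _, by positivity⟩
  filter_upwards [hmem] with δ hδ
  -- Fixed δ. Set up the lattice construction.
  have hδ0 : 0 < δ := hδ.1
  set lam : ℝ := δ * s₀ / r with hlamdef
  have hlam0 : 0 ≤ lam := by positivity
  have hlam1 : lam < 1 := by
    rw [hlamdef, _root_.div_lt_one rpos]
    have h2 := hδ.2
    rw [lt_div_iff₀ (by positivity : (0:ℝ) < s₀ + 1)] at h2
    nlinarith [hδ.1]
  have h1lam : (0 : ℝ) < 1 - lam := by linarith
  have hlr : lam * r = δ * s₀ := div_mul_cancel₀ _ rpos.ne'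
  -- inner body
  set Tin : Set (EuclideanSpace ℝ (Fin n)) := (fun x => (1 - lam) • x + lam • t0) '' T
    with hTindef
  have hTinvol : volume Tin = ENNReal.ofReal ((1 - lam) ^ n) * volume T := by
    have himg : Tin = (lam • t0) +ᵥ ((1 - lam) • T) := by
      ext z
      constructor
      · rintro ⟨t, ht, rfl⟩
        exact ⟨(1 - lam) • t, ⟨t, ht, rfl⟩, by
          show lam • t0 + (1 - lam) • t = (1 - lam) • t + lam • t0
          exact add_comm _ _⟩
      · rintro ⟨_, ⟨t, ht, rfl⟩, rfl⟩
        exact ⟨t, ht, by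
          show (1 - lam) • t + lam • t0 = lam • t0 + (1 - lam) • t
          exact add_comm _ _⟩
    rw [himg, measure_vadd, Measure.addHaar_smul, finrank_euclideanSpace_fin,
      abs_of_nonneg (pow_nonneg h1lam.le n)]
  -- Tin is "deep inside" T
  have hTin_add : ∀ x ∈ Tin, ∀ w : EuclideanSpace ℝ (Fin n), ‖w‖ ≤ lam * r →
      x + w ∈ T := by
    rintro x ⟨t, ht, rfl⟩ w hw
    rcases hlam0.eq_or_lt with h0 | hpos
    · have hw0 : w = 0 := by
        rw [← norm_le_zero_iff]
        calc ‖w‖ ≤ lam * r := hw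
          _ = 0 := by rw [← h0]; ring
      have : (1 - lam) • t + lam • t0 + w = t := by rw [← h0, hw0]; simp
      rw [this]; exact ht
    · have hmem : t0 + lam⁻¹ • w ∈ T := by
        apply hcb
        rw [Metric.mem_closedBall, dist_eq_norm]
        have : t0 + lam⁻¹ • w - t0 = lam⁻¹ • w := by abel
        rw [this, norm_smul, norm_inv, Real.norm_eq_abs, abs_of_pos hpos]
        calc lam⁻¹ * ‖w‖ ≤ lam⁻¹ * (lam * r) := by
              apply mul_le_mul_of_nonneg_left hw (by positivity)
          _ = r := by field_simp
      have hconv : (1 - lam) • t + lam • (t0 + lam⁻¹ • w) ∈ T :=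
        hTconv ht hmem (by linarith) hlam0 (by ring)
      have heq : (1 - lam) • t + lam • (t0 + lam⁻¹ • w) = (1 - lam) • t + lam • t0 + w := by
        rw [smul_add, smul_inv_smul₀ hpos.ne']
        abel
      rwa [heq] at hconv
  -- weights
  set vT : ℝ := (volume T).toReal with hvTdef
  have hvT : 0 < vT := ENNReal.toReal_pos hμT0 hμTtop
  set Vin : ℝ := (1 - lam) ^ n * vT with hVindef
  have hVin0 : 0 < Vin := mul_pos (pow_pos h1lam n) hvT
  set ω : ℝ := δ ^ n / Vin with hωdef
  have hω : 0 < ω := by positivity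
  have hofVin : ENNReal.ofReal Vin = ENNReal.ofReal ((1 - lam) ^ n) * volume T := by
    rw [hVindef, ENNReal.ofReal_mul (pow_nonneg h1lam.le n), hvTdef,
      ENNReal.ofReal_toReal hμTtop]
  -- lattice points
  set pt : (Fin n → ℤ) → EuclideanSpace ℝ (Fin n) :=
    fun m => WithLp.toLp 2 (fun i => δ * m i : Fin n → ℝ) with hptdef
  have hpt_apply : ∀ m i, pt m i = δ * m i := fun m i => rfl
  have ptinj : Function.Injective pt := by
    intro a b h
    funext i
    have h2 : δ * (a i : ℝ) = δ * (b i : ℝ) :=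
        (hpt_apply a i).symm.trans ((congrArg (fun v => v i) h).trans (hpt_apply b i))
    have h3 : (a i : ℝ) = b i := mul_left_cancel₀ hδ0.ne' h2
    exact_mod_cast h3
  obtain ⟨R, hR⟩ := hKT.isBounded.subset_closedBall (0 : EuclideanSpace ℝ (Fin n))
  have hfin : {m : Fin n → ℤ | pt m ∈ K - T}.Finite := by
    apply Set.Finite.subset (Set.finite_Icc (fun _ : Fin n => -⌈R / δ⌉) fun _ => ⌈R / δ⌉)
    intro m hm
    have hnorm : ‖pt m‖ ≤ R := by
      have := hR hm
      rwa [Metric.mem_closedBall, dist_zero_right] at this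
    have hcoord : ∀ i, |(m i : ℝ)| ≤ R / δ := by
      intro i
      rw [le_div_iff₀ hδ0, mul_comm]
      calc δ * |(m i : ℝ)| = |δ * (m i : ℝ)| := by
            rw [abs_mul, abs_of_pos hδ0]
        _ = |pt m i| := by rw [hpt_apply]
        _ ≤ ‖pt m‖ := aux_abs_coord_le _ i
        _ ≤ R := hnorm
    constructor
    · intro i
      have h1 : -(R / δ) ≤ (m i : ℝ) := neg_le_of_abs_le (hcoord i)
      have h2 : ((-⌈R / δ⌉ : ℤ) : ℝ) ≤ (m i : ℝ) := by
        push_cast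
        calc -((⌈R / δ⌉ : ℤ) : ℝ) ≤ -(R / δ) := by
              simp only [neg_le_neg_iff]
              exact Int.le_ceil _
          _ ≤ (m i : ℝ) := h1
      exact_mod_cast h2
    · intro i
      have h1 : (m i : ℝ) ≤ R / δ := le_of_abs_le (hcoord i)
      have h2 : (m i : ℝ) ≤ ((⌈R / δ⌉ : ℤ) : ℝ) := h1.trans (Int.le_ceil _)
      exact_mod_cast h2
  set S₀ : Finset (Fin n → ℤ) := hfin.toFinset with hS₀def
  have hS₀mem : ∀ m, m ∈ S₀ ↔ pt m ∈ K - T := fun m => hfin.mem_toFinset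
  set w : ℝ≥0 := Real.toNNReal ω with hwdef
  have hwpos : (0 : ℝ≥0) < w := Real.toNNReal_pos.2 hω
  have hwcoe : (w : ℝ) = ω := Real.coe_toNNReal ω hω.le
  set S : Finset ((EuclideanSpace ℝ (Fin n)) × ℝ≥0) := S₀.image fun m => (pt m, w)
    with hSdef
  have hSinj : ∀ a ∈ S₀, ∀ b ∈ S₀, (pt a, w) = (pt b, w) → a = b := by
    intro a _ b _ h
    exact ptinj (congrArg Prod.fst h)
  -- cubes
  set cube : (Fin n → ℤ) → Set (EuclideanSpace ℝ (Fin n)) :=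
    fun m => {z | ∀ i, z i ∈ Set.Ico (pt m i) (pt m i + δ)} with hcubedef
  have cube_mem : ∀ (z : EuclideanSpace ℝ (Fin n)) m,
      z ∈ cube m ↔ ∀ i, ⌊z i / δ⌋ = m i := by
    intro z m
    simp only [hcubedef, Set.mem_setOf_eq, Set.mem_Ico, hpt_apply]
    apply forall_congr'
    intro i
    rw [Int.floor_eq_iff]
    constructor
    · rintro ⟨h1, h2⟩
      constructor
      · rw [le_div_iff₀ hδ0]
        calc ((m i : ℝ)) * δ = δ * (m i : ℝ) := mul_comm _ _
          _ ≤ z i := h1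
      · rw [div_lt_iff₀ hδ0]
        push_cast
        calc z i < δ * (m i : ℝ) + δ := h2
          _ = ((m i : ℝ) + 1) * δ := by ring
    · rintro ⟨h1, h2⟩
      rw [le_div_iff₀ hδ0] at h1
      rw [div_lt_iff₀ hδ0] at h2
      push_cast at h2
      constructor
      · calc δ * (m i : ℝ) = (m i : ℝ) * δ := mul_comm _ _
          _ ≤ z i := h1
      · calc z i < ((m i : ℝ) + 1) * δ := h2
          _ = δ * (m i : ℝ) + δ := by ring
  have cube_vol : ∀ m, volume (cube m) = ENNReal.ofReal (δ ^ n) := fun m =>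
    aux_cube_volume (pt m) δ hδ0.le
  have cube_meas : ∀ m, MeasurableSet (cube m) := fun m => aux_cube_measurable (pt m) δ
  have cube_disj : ∀ (A : Finset (Fin n → ℤ)), (↑A : Set (Fin n → ℤ)).PairwiseDisjoint cube := by
    intro A a _ b _ hab
    apply Set.disjoint_left.2
    intro z hza hzb
    exact hab (funext fun i => ((cube_mem z a).1 hza i).symm.trans ((cube_mem z b).1 hzb i))
  -- covering property
  have hcover : ∀ k ∈ K, (1 : ℝ) ≤ ∑ p ∈ S, (p.2 : ℝ) * (p.1 +ᵥ T).indicator 1 k := by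
    intro k hk
    set F : Finset (Fin n → ℤ) := S₀.filter (fun m => k ∈ pt m +ᵥ T) with hFdef
    have hsum : ∑ p ∈ S, (p.2 : ℝ) * (p.1 +ᵥ T).indicator 1 k = ω * F.card := by
      rw [hSdef, Finset.sum_image hSinj]
      have hterm : ∀ m ∈ S₀, (w : ℝ) * (pt m +ᵥ T).indicator 1 k =
          if k ∈ pt m +ᵥ T then ω else 0 := by
        intro m _
        rw [Set.indicator_apply, hwcoe]
        split <;> simp
      rw [Finset.sum_congr rfl hterm, ← Finset.sum_filter, ← hFdef, Finset.sum_const,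
        nsmul_eq_mul, mul_comm]
    rw [hsum]
    -- the inner body around k is covered by the cubes indexed by F
    have hDsub : (k +ᵥ (-Tin)) ⊆ ⋃ m ∈ F, cube m := by
      intro z hz
      have hzT : k - z ∈ Tin := by
        rw [Set.mem_vadd_set_iff_neg_vadd_mem] at hz
        have h2 : -(-k +ᵥ z) ∈ Tin := Set.mem_neg.1 hz
        have h3 : -(-k +ᵥ z) = k - z := by
          simp [vadd_eq_add]
          abel
        rwa [h3] at h2
      set m : Fin n → ℤ := fun i => ⌊z i / δ⌋ with hmdef
      have hzc : z ∈ cube m := (cube_mem z m).2 fun i => rfl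
      have hcoordbd : ∀ i, |z i - pt m i| ≤ δ := by
        intro i
        have h1 := hzc i
        rw [Set.mem_Ico] at h1
        rw [abs_sub_le_iff]
        constructor <;> linarith [h1.1, h1.2]
      have hnormzw : ‖z - pt m‖ ≤ lam * r := by
        rw [hlr, ← dist_eq_norm]
        exact aux_dist_le z (pt m) hδ0.le hcoordbd
      have hkT : k - pt m ∈ T := by
        have heq : k - pt m = (k - z) + (z - pt m) := by abel
        rw [heq]
        exact hTin_add (k - z) hzT (z - pt m) hnormzw
      have hmS₀ : m ∈ S₀ := by
        rw [hS₀mem]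
        have h4 : k - (k - pt m) ∈ K - T := Set.sub_mem_sub hk hkT
        simpa using h4
      have hmF : m ∈ F := by
        rw [hFdef, Finset.mem_filter]
        refine ⟨hmS₀, ⟨k - pt m, hkT, ?_⟩⟩
        show pt m + (k - pt m) = k
        abel
      exact Set.mem_biUnion hmF hzc
    have hvol1 : ENNReal.ofReal Vin ≤ (F.card : ℝ≥0∞) * ENNReal.ofReal (δ ^ n) := by
      calc ENNReal.ofReal Vin = volume Tin := by rw [hofVin, hTinvol]
        _ = volume (k +ᵥ (-Tin)) := by rw [measure_vadd, Measure.measure_neg]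
        _ ≤ volume (⋃ m ∈ F, cube m) := measure_mono hDsub
        _ ≤ ∑ m ∈ F, volume (cube m) := measure_biUnion_finset_le F cube
        _ = (F.card : ℝ≥0∞) * ENNReal.ofReal (δ ^ n) := by
            rw [Finset.sum_congr rfl (fun m _ => cube_vol m), Finset.sum_const,
              nsmul_eq_mul]
    have hreal : Vin ≤ (F.card : ℝ) * δ ^ n := by
      have htop : ((F.card : ℝ≥0∞) * ENNReal.ofReal (δ ^ n)) ≠ ⊤ :=
        ENNReal.mul_ne_top (ENNReal.natCast_ne_top _) ENNReal.ofReal_ne_top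
      have h5 := ENNReal.toReal_mono htop hvol1
      rwa [ENNReal.toReal_ofReal hVin0.le, ENNReal.toReal_mul, ENNReal.toReal_natCast,
        ENNReal.toReal_ofReal (by positivity)] at h5
    have h6 : ω * (F.card : ℝ) = ((F.card : ℝ) * δ ^ n) / Vin := by
      rw [hωdef]; ring
    rw [h6, le_div_iff₀ hVin0, one_mul]
    exact hreal
  -- fracCover is at most the total weight
  have hWptpos : ∀ p ∈ S, (0 : ℝ≥0) < p.2 := by
    intro p hp
    rw [hSdef, Finset.mem_image] at hp
    obtain ⟨m, _, rfl⟩ := hp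
    exact hwpos
  have hle1 : fracCover K T ≤ ∑ p ∈ S, (p.2 : ℝ≥0∞) :=
    sInf_le ⟨S, hWptpos, hcover, rfl⟩
  refine hle1.trans ?_
  -- total weight estimate
  have hSsum : (∑ p ∈ S, (p.2 : ℝ≥0∞)) = (S₀.card : ℝ≥0∞) * ENNReal.ofReal ω := by
    rw [hSdef, Finset.sum_image hSinj]
    have hconst : ∀ m ∈ S₀, (((pt m, w).2 : ℝ≥0) : ℝ≥0∞) = ENNReal.ofReal ω := fun m _ => rfl
    rw [Finset.sum_congr rfl hconst, Finset.sum_const, nsmul_eq_mul]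
  have hsub2 : (⋃ m ∈ S₀, cube m) ⊆ Metric.cthickening (δ * s₀) (K - T) := by
    intro z hz
    obtain ⟨m, hm, hzc⟩ := Set.mem_iUnion₂.1 hz
    apply Metric.mem_cthickening_of_dist_le z (pt m) _ _ ((hS₀mem m).1 hm)
    have hcoordbd : ∀ i, |z i - pt m i| ≤ δ := by
      intro i
      have h1 := hzc i
      rw [Set.mem_Ico] at h1
      rw [abs_sub_le_iff]
      constructor <;> linarith [h1.1, h1.2]
    exact aux_dist_le z (pt m) hδ0.le hcoordbd
  have hcard : (S₀.card : ℝ≥0∞) * ENNReal.ofReal (δ ^ n) ≤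
      volume (Metric.cthickening (δ * s₀) (K - T)) := by
    calc (S₀.card : ℝ≥0∞) * ENNReal.ofReal (δ ^ n)
        = ∑ m ∈ S₀, volume (cube m) := by
          rw [Finset.sum_congr rfl (fun m _ => cube_vol m), Finset.sum_const, nsmul_eq_mul]
      _ = volume (⋃ m ∈ S₀, cube m) :=
          (measure_biUnion_finset (cube_disj S₀) fun m _ => cube_meas m).symm
      _ ≤ _ := measure_mono hsub2
  rw [hSsum, hf]
  have hωsplit : ENNReal.ofReal ω = ENNReal.ofReal (δ ^ n) *
      (ENNReal.ofReal ((1 - δ * s₀ / r) ^ n) * volume T)⁻¹ := by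
    rw [hωdef, ENNReal.ofReal_div_of_pos hVin0, div_eq_mul_inv, hofVin, ← hlamdef]
  rw [hωsplit, ← mul_assoc]
  exact mul_le_mul_left hcard _
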